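/- Let n ≥ 2 and let A be an (n×n) real matrix. For vectors e₁, …, e_{n−1} ∈ ℝⁿ, the sum over i from 1 to n−1 of the generalized cross product e₁ × ⋯ × e_{i−1} × (A eᵢ) × e_{i+1} × ⋯ × e_{n−1} equals (tr(A) I − Aᵀ) applied to e₁ × ⋯ × e_{n−1}. -/
import Mathlib

open Matrix

private lemma key {n : ℕ} (A M : Matrix (Fin n) (Fin n) ℝ) :
    ∑ j, (M.updateRow j (A.mulVec (M j))).det = A.trace * M.det := by
  have h1 : ∀ j, (M.updateRow j (A.mulVec (M j))).det
      = (Mᵀ.adjugate * A * Mᵀ) j j := by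
    intro j
    rw [← Matrix.det_transpose, ← Matrix.updateCol_transpose, ← Matrix.cramer_apply,
      Matrix.cramer_eq_adjugate_mulVec]
    rw [Matrix.mulVec_mulVec]
    simp [Matrix.mul_apply, Matrix.mulVec, dotProduct]
  calc ∑ j, (M.updateRow j (A.mulVec (M j))).det
      = (Mᵀ.adjugate * A * Mᵀ).trace := by
        rw [Matrix.trace]; exact Finset.sum_congr rfl fun j _ => h1 j
    _ = (Mᵀ * Mᵀ.adjugate * A).trace := by
        rw [Matrix.trace_mul_comm, Matrix.mul_assoc]
    _ = A.trace * M.det := by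
        rw [Matrix.mul_adjugate, Matrix.det_transpose, Matrix.smul_mul, Matrix.one_mul,
          Matrix.trace_smul]
        simp [mul_comm]

/-- Generalized cross product identity in `ℝⁿ` (`n = m+1 ≥ 2`): if `v` is the
generalized cross product of `e₁, …, e_{n-1}` (characterized by `⟨v, w⟩ = det(e₁,…,e_{n-1},w)`)
and `v' i` is the generalized cross product with `eᵢ` replaced by `A eᵢ`, then
`∑ i, v' i = (tr A) v − Aᵀ v`. -/
theorem stmt2 (m : ℕ) (hm : 1 ≤ m) (A : Matrix (Fin (m + 1)) (Fin (m + 1)) ℝ)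
    (e : Fin m → (Fin (m + 1) → ℝ)) (v : Fin (m + 1) → ℝ)
    (hv : ∀ w : Fin (m + 1) → ℝ, v ⬝ᵥ w = (Matrix.of (Fin.snoc e w)).det)
    (v' : Fin m → (Fin (m + 1) → ℝ))
    (hv' : ∀ (i : Fin m) (w : Fin (m + 1) → ℝ),
      v' i ⬝ᵥ w = (Matrix.of (Fin.snoc (Function.update e i (A.mulVec (e i))) w)).det) :
    (∑ i, v' i) = A.trace • v - A.transpose.mulVec v := by
  have main : ∀ w : Fin (m + 1) → ℝ,
      (∑ i, v' i) ⬝ᵥ w = (A.trace • v - A.transpose.mulVec v) ⬝ᵥ w := by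
    intro w
    set M : Matrix (Fin (m + 1)) (Fin (m + 1)) ℝ := Matrix.of (Fin.snoc e w) with hM
    have hrow : ∀ i : Fin m, M i.castSucc = e i := fun i => by funext k; rw [hM]; simp
    have hlast : M (Fin.last m) = w := by funext k; rw [hM]; simp
    have hsum := key A M
    rw [Fin.sum_univ_castSucc (f := fun j => (M.updateRow j (A.mulVec (M j))).det)] at hsum
    have h2 : ∀ i : Fin m, (M.updateRow i.castSucc (A.mulVec (M i.castSucc))).det
        = v' i ⬝ᵥ w := by
      intro i
      rw [hv' i w, hrow i]
      congr 1
      ext j k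
      refine Fin.lastCases ?_ ?_ j
      · simp [Matrix.updateRow_apply, hM, (Fin.castSucc_lt_last i).ne']
      · intro j
        by_cases h : j = i
        · subst h; simp
        · have hne : j.castSucc ≠ i.castSucc := by simpa using h
          simp [Matrix.updateRow_apply, hM, Function.update_of_ne hne, h]
    have h3 : (M.updateRow (Fin.last m) (A.mulVec (M (Fin.last m)))).det
        = v ⬝ᵥ A.mulVec w := by
      rw [hv (A.mulVec w), hlast]
      congr 1
      ext j k
      refine Fin.lastCases ?_ ?_ j
      · simp
      · intro j
        simp [Matrix.updateRow_apply, (Fin.castSucc_lt_last j).ne, hM]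
    have hsd : (∑ i, v' i) ⬝ᵥ w = ∑ i, v' i ⬝ᵥ w := by
      simp only [dotProduct, Finset.sum_apply, Finset.sum_mul]
      exact Finset.sum_comm
    have hAv : A.transpose.mulVec v ⬝ᵥ w = v ⬝ᵥ A.mulVec w := by
      rw [Matrix.mulVec_transpose, Matrix.dotProduct_mulVec]
    rw [Finset.sum_congr rfl (fun i _ => h2 i), h3] at hsum
    have h5 : ∑ i, v' i ⬝ᵥ w + v ⬝ᵥ A.mulVec w = A.trace * (v ⬝ᵥ w) := by
      rw [hv w]; exact hsum
    rw [hsd, sub_dotProduct, smul_dotProduct, hAv, smul_eq_mul]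
    linarith
  funext j
  have := main (Pi.single j 1)
  simpa using this
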